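/- Consider the principal nilpotent case of gl_N (partition p = N, so r = r₁ = 1). The Adler-type operator is the generic monic differential operator L₁(∂) = −(−∂)^N + Σ_{k=0}^{N−1} w_k(−∂)^k over the differential polynomial algebra 𝒲 = 𝔽[w_k^{(n)} : 0 ≤ k ≤ N−1, n ≥ 0]. Then the first λ-bracket determined by the bi-Adler identity on generators is: {w_i _λ w_j}₁ = Σ_{n=0}^{N−i−j−1} ( binom(n+j, j)·(−λ)^n − binom(n+i, i)·(λ+∂)^n ) · w_{i+j+n+1}, where by convention w_N = −1. In particular this bracket is skewsymmetric: {w_j _λ w_i}₁ = −{w_i _{−λ−∂} w_j}₁ (with ∂ acting on coefficients). -/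

import Mathlib

open scoped BigOperators

/-- Generalized binomial coefficient `binom(m, i)` for `m ∈ ℤ`, `i ∈ ℕ`. -/
def intBin (m : ℤ) (i : ℕ) : ℤ :=
  (∏ j ∈ Finset.range i, (m - (j : ℤ))) / (Nat.factorial i : ℤ)

/-- Coefficient of `z^p w^q λ^s` in `X(w+λ+∂) ι_z(z−w−λ−∂)⁻¹ Y*(λ−z)` (scalar case),
for pseudodifferential operators with coefficient functions `x`, `y`. -/
noncomputable def adlerRHS1 {V : Type*} [CommRing V] (d : V → V) (x y : ℤ → V)
    (p q : ℤ) (s : ℕ) : V :=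
  ∑ᶠ (m : ℤ) (l : ℤ) (n : ℕ) (i : ℕ) (j : ℕ) (u : ℕ) (v : ℕ),
    if l - (i : ℤ) - (n : ℤ) - 1 = p ∧ m + (n : ℤ) - (j : ℤ) = q ∧
        i + j = s + u + v ∧ u ≤ i ∧ v ≤ j then
      x m * ((intBin (m + n) j : ℤ) : V) * (j.choose v : V) *
        ((intBin l i : ℤ) : V) * (-1 : V) ^ i * (i.choose u : V) * d^[u + v] (y l)
    else 0

/-- Coefficient of `z^p w^q λ^s` in `X(z) ι_z(z−w−λ−∂)⁻¹ Y(w)` (scalar case). -/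
noncomputable def adlerRHS2 {V : Type*} [CommRing V] (d : V → V) (x y : ℤ → V)
    (p q : ℤ) (s : ℕ) : V :=
  ∑ᶠ (m : ℤ) (l : ℤ) (n : ℕ) (j : ℕ) (v : ℕ),
    if m - (n : ℤ) - 1 = p ∧ (n : ℤ) - (j : ℤ) + l = q ∧ j = s + v ∧ j ≤ n ∧ v ≤ j then
      x m * (n.choose j : V) * (j.choose v : V) * d^[v] (y l)
    else 0

/-- The coefficient function of the constant operator `1`. -/
def oneC {V : Type*} [CommRing V] : ℤ → V := fun m => if m = 0 then 1 else 0

/-- The coefficient function of the generic operator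
`L₁(∂) = −(−∂)^N + Σ_{k=0}^{N−1} w_k (−∂)^k`:
the coefficient of `∂^m` is `(−1)^{N+1}` for `m = N`, `(−1)^k w_k` for `0 ≤ m = k < N`,
and `0` otherwise. -/
def genC {V : Type*} [CommRing V] (N : ℕ) (w : ℕ → V) : ℤ → V := fun m =>
  if m = (N : ℤ) then (-1 : V) ^ (N + 1)
  else if 0 ≤ m ∧ m < (N : ℤ) then (-1 : V) ^ m.toNat * w m.toNat
  else 0

/-- `w_k` for `k < N`, and `w_N = −1` by convention. -/
def wExt {V : Type*} [CommRing V] (N : ℕ) (w : ℕ → V) (k : ℕ) : V :=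
  if k = N then -1 else w k

section AuxLemmas

lemma prod_desc (n k : ℕ) : (∏ j ∈ Finset.range k, ((n : ℤ) - (j : ℤ))) = (n.descFactorial k : ℤ) := by
  induction k with
  | zero => simp
  | succ k ih =>
    rw [Finset.prod_range_succ, ih]
    rcases le_or_gt (k+1) n with h | h
    · rw [Nat.descFactorial_succ]
      push_cast
      rw [Int.natCast_sub (by omega)]
      push_cast
      ring
    · rw [Nat.descFactorial_eq_zero_iff_lt.2 h]
      rcases Nat.lt_or_ge n k with h2 | h2
      · rw [Nat.descFactorial_eq_zero_iff_lt.2 h2]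
        simp
      · have hnk : n = k := by omega
        subst hnk
        simp

lemma intBin_natCast (n k : ℕ) : intBin (n : ℤ) k = (n.choose k : ℤ) := by
  rw [intBin, prod_desc, Nat.descFactorial_eq_factorial_mul_choose]
  push_cast
  rw [Int.mul_ediv_cancel_left _ (by exact_mod_cast (Nat.factorial_pos k).ne')]

lemma prod_asc (n k : ℕ) : (∏ j ∈ Finset.range k, ((-(n:ℤ) - 1) - (j : ℤ)))
    = (-1)^k * ((n + k).descFactorial k : ℤ) := by
  induction k with
  | zero => simp
  | succ k ih =>
    rw [Finset.prod_range_succ, ih, show n + (k+1) = (n+k)+1 by ring,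
      Nat.succ_descFactorial_succ (n+k) k]
    push_cast
    ring

lemma intBin_negSucc (n k : ℕ) : intBin (-(n:ℤ) - 1) k = (-1)^k * ((n+k).choose k : ℤ) := by
  rw [intBin, prod_asc, Nat.descFactorial_eq_factorial_mul_choose]
  push_cast
  rw [show ((-1:ℤ))^k * ((k.factorial :ℤ) * ((n+k).choose k)) = (k.factorial : ℤ) * ((-1)^k * ((n+k).choose k)) by ring]
  rw [Int.mul_ediv_cancel_left _ (by exact_mod_cast (Nat.factorial_pos k).ne')]

lemma intBin_zero (m : ℤ) : intBin m 0 = 1 := by simp [intBin]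

lemma intBin_pascal (m : ℤ) (t : ℕ) : intBin (m + 1) (t + 1) = intBin m (t + 1) + intBin m t := by
  rcases m with a | a
  · -- m = a ≥ 0
    rw [show (Int.ofNat a : ℤ) = ((a:ℕ):ℤ) from rfl,
      show ((a:ℕ):ℤ) + 1 = ((a+1 : ℕ) : ℤ) by push_cast; ring]
    rw [intBin_natCast, intBin_natCast, intBin_natCast]
    rw [Nat.choose_succ_succ']
    push_cast; ring
  · -- m = -(a+1)
    rcases a with _ | a
    · have e1 : ((Int.negSucc 0 : ℤ) + 1) = ((0:ℕ):ℤ) := by decide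
      have e2 : (Int.negSucc 0 : ℤ) = -((0:ℕ):ℤ) - 1 := by decide
      rw [e1, e2, intBin_natCast, intBin_negSucc, intBin_negSucc]
      simp [Nat.choose_zero_succ, Nat.choose_self, pow_succ]
    · have e1 : ((Int.negSucc (a+1) : ℤ) + 1) = -((a:ℕ):ℤ) - 1 := by
        rw [Int.negSucc_eq]; push_cast; ring
      have e2 : (Int.negSucc (a+1) : ℤ) = -((a+1:ℕ):ℤ) - 1 := by
        rw [Int.negSucc_eq]; push_cast; ring
      rw [e1, e2, intBin_negSucc, intBin_negSucc, intBin_negSucc]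
      have h1 : (a+1) + (t+1) = (a+t+1)+1 := by ring
      have h2 : (a+1) + t = (a+t)+1 := by ring
      have h3 : a + (t+1) = a+t+1 := by ring
      rw [h1, h2, h3, Nat.choose_succ_succ' (a+t+1) t]
      push_cast
      ring

lemma lemG (j : ℕ) : ∀ (M t : ℕ), ∑ a ∈ Finset.range (t+1),
    ((-1:ℤ)^a * ((M.choose a : ℕ):ℤ) * (((t-a+j).choose j : ℕ):ℤ))
    = (-1)^t * intBin ((M:ℤ) - j - 1) t := by
  intro M
  induction M with
  | zero =>
    intro t
    have : ∀ a ∈ Finset.range (t+1), ((-1:ℤ)^a * (((0:ℕ).choose a : ℕ):ℤ) * (((t-a+j).choose j : ℕ):ℤ))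
        = if a = 0 then (((t+j).choose j : ℕ):ℤ) else 0 := by
      intro a _
      rcases a with _ | a
      · simp
      · simp [Nat.choose_zero_succ]
    have e0 : ((0:ℕ):ℤ) - (j:ℤ) - 1 = -(j:ℤ) - 1 := by push_cast; ring
    rw [Finset.sum_congr rfl this, Finset.sum_ite_eq' (Finset.range (t+1)) 0, e0, intBin_negSucc,
      if_pos (Finset.mem_range.mpr (Nat.succ_pos t))]
    rw [Nat.add_comm j t, Nat.choose_symm_add, ← mul_assoc, ← pow_add]
    have hev : Even (t+t) := ⟨t, rfl⟩
    rw [hev.neg_one_pow, one_mul]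
  | succ M ih =>
    intro t
    rcases t with _ | t
    · simp [intBin_zero]
    · -- t+1 case
      rw [Finset.sum_range_succ' _ (t+1)]
      -- f 0 + sum over a+1
      have hsplit : ∀ a ∈ Finset.range (t+1),
          ((-1:ℤ)^(a+1) * (((M+1).choose (a+1) : ℕ):ℤ) * (((t+1-(a+1)+j).choose j : ℕ):ℤ))
          = (-1:ℤ)^(a+1) * ((M.choose a : ℕ):ℤ) * (((t-a+j).choose j : ℕ):ℤ)
            + (-1:ℤ)^(a+1) * ((M.choose (a+1) : ℕ):ℤ) * (((t-a+j).choose j : ℕ):ℤ) := by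
        intro a _
        rw [Nat.choose_succ_succ' M a, show t+1-(a+1) = t - a by omega]
        push_cast
        ring
      rw [Finset.sum_congr rfl hsplit, Finset.sum_add_distrib]
      have e1 : ∑ a ∈ Finset.range (t+1),
          ((-1:ℤ)^(a+1) * ((M.choose a : ℕ):ℤ) * (((t-a+j).choose j : ℕ):ℤ))
          = -((-1)^t * intBin ((M:ℤ) - j - 1) t) := by
        rw [← ih t, ← Finset.sum_neg_distrib]
        apply Finset.sum_congr rfl
        intro a _
        rw [pow_succ]
        ring
      have e2 : (∑ a ∈ Finset.range (t+1),
          ((-1:ℤ)^(a+1) * ((M.choose (a+1) : ℕ):ℤ) * (((t-a+j).choose j : ℕ):ℤ)))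
          + ((-1:ℤ)^0 * ((M+1).choose 0 : ℤ) * (((t+1-0+j).choose j : ℕ):ℤ))
          = (-1)^(t+1) * intBin ((M:ℤ) - j - 1) (t+1) := by
        rw [← ih (t+1), Finset.sum_range_succ' _ (t+1)]
        congr 1
        · apply Finset.sum_congr rfl
          intro a _
          rw [show t+1-(a+1) = t - a by omega]
        · simp
      rw [e1]
      have hpas : ((M+1:ℕ):ℤ) - j - 1 = ((M:ℤ) - j - 1) + 1 := by push_cast; ring
      rw [hpas, intBin_pascal, pow_succ] at *
      linear_combination e2

lemma vand (a b k K : ℕ) (hK : k ≤ K) :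
    (∑ u ∈ Finset.range (K+1), (if u ≤ a ∧ u ≤ k ∧ k - u ≤ b then
      ((a.choose u : ℕ):ℤ) * ((b.choose (k-u) : ℕ):ℤ) else 0))
    = (((a+b).choose k : ℕ) : ℤ) := by
  rw [← Finset.sum_subset (Finset.range_subset_range.mpr (by omega : k+1 ≤ K+1))
    (by intro u _ hu; rw [if_neg]; intro ⟨_, h2, _⟩; exact hu (Finset.mem_range.mpr (by omega)))]
  have : ∀ u ∈ Finset.range (k+1), (if u ≤ a ∧ u ≤ k ∧ k - u ≤ b then
      ((a.choose u : ℕ):ℤ) * ((b.choose (k-u) : ℕ):ℤ) else 0)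
      = ((a.choose u : ℕ):ℤ) * ((b.choose (k-u) : ℕ):ℤ) := by
    intro u hu
    rw [Finset.mem_range] at hu
    by_cases h : u ≤ a ∧ u ≤ k ∧ k - u ≤ b
    · rw [if_pos h]
    · rw [if_neg h]
      push_neg at h
      rcases Nat.lt_or_ge a u with h2 | h2
      · rw [Nat.choose_eq_zero_of_lt h2]; simp
      · have h3 : b < k - u := by
          rcases Nat.lt_or_ge b (k-u) with h4 | h4
          · exact h4
          · exact absurd h4 (by intro h5; exact absurd (h h2 (by omega)) (by omega))
        rw [Nat.choose_eq_zero_of_lt h3]; simp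
  rw [Finset.sum_congr rfl this]
  rw [Nat.add_choose_eq a b k]
  rw [Finset.Nat.sum_antidiagonal_eq_sum_range_succ (fun x y => a.choose x * b.choose y) k]
  push_cast
  rfl

lemma lemH (s m : ℕ) (h : s ≤ m) :
    (∑ n ∈ Finset.Icc s m, ((-1:ℤ)^n * ((n.choose (n-s) : ℕ):ℤ) * ((m.choose (m-n) : ℕ):ℤ)))
    = if m = s then (-1:ℤ)^s else 0 := by
  have key : ∀ n ∈ Finset.Icc s m, ((-1:ℤ)^n * ((n.choose (n-s) : ℕ):ℤ) * ((m.choose (m-n) : ℕ):ℤ))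
      = (-1:ℤ)^n * ((m.choose s : ℕ):ℤ) * (((m-s).choose (n-s) : ℕ):ℤ) := by
    intro n hn
    rw [Finset.mem_Icc] at hn
    rw [Nat.choose_symm hn.1, Nat.choose_symm hn.2]
    have := Nat.choose_mul (n := m) (k := n) (s := s) hn.1
    push_cast [← this]
    have thisZ : ((m.choose n : ℕ):ℤ) * ((n.choose s : ℕ):ℤ)
        = ((m.choose s : ℕ):ℤ) * (((m-s).choose (n-s) : ℕ):ℤ) := by exact_mod_cast this
    linear_combination ((-1:ℤ)^n) * thisZ
  rw [Finset.sum_congr rfl key]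
  have hbij : (∑ n ∈ Finset.Icc s m, ((-1:ℤ)^n * ((m.choose s : ℕ):ℤ) * (((m-s).choose (n-s) : ℕ):ℤ)))
      = ∑ k ∈ Finset.range (m-s+1), ((-1:ℤ)^(s+k) * ((m.choose s : ℕ):ℤ) * (((m-s).choose k : ℕ):ℤ)) := by
    apply Finset.sum_nbij' (fun n => n - s) (fun k => s + k) <;>
      simp only [Finset.mem_Icc, Finset.mem_range] <;> intro n hn
    · omega
    · omega
    · omega
    · omega
    · rw [show s + (n - s) = n by omega]
  rw [hbij]
  have e : ∀ k ∈ Finset.range (m-s+1), ((-1:ℤ)^(s+k) * ((m.choose s : ℕ):ℤ) * (((m-s).choose k : ℕ):ℤ))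
      = ((-1:ℤ)^s * ((m.choose s : ℕ):ℤ)) * ((-1:ℤ)^k * (((m-s).choose k : ℕ):ℤ)) := by
    intro k _
    rw [pow_add]
    ring
  rw [Finset.sum_congr rfl e, ← Finset.mul_sum, Int.alternating_sum_range_choose]
  by_cases hms : m = s
  · rw [if_pos hms, if_pos (by omega), mul_one]
    rw [hms, Nat.choose_self]
    simp
  · rw [if_neg hms, if_neg (by omega), mul_zero]

end AuxLemmas

section Helpers

variable {V : Type*} [CommRing V]

lemma finsum_zero'' {α : Sort*} (f : α → V) (h : ∀ a, f a = 0) : ∑ᶠ a, f a = 0 := by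
  rw [finsum_congr h]
  exact finsum_zero

lemma genC_eq_zero {N : ℕ} {w : ℕ → V} {l : ℤ} (h : l < 0 ∨ (N:ℤ) < l) : genC N w l = 0 := by
  unfold genC
  rw [if_neg (by omega), if_neg (by omega)]

lemma genC_eq (N : ℕ) (w : ℕ → V) (k : ℕ) (h : k ≤ N) :
    genC N w (k:ℤ) = (-1:V)^k * wExt N w k := by
  unfold genC wExt
  rcases eq_or_lt_of_le h with h1 | h1
  · subst h1
    rw [if_pos rfl, if_pos rfl, pow_succ]
  · rw [if_neg (by exact_mod_cast (by omega : (k:ℤ) ≠ (N:ℤ))), if_pos ⟨by positivity, by exact_mod_cast h1⟩,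
      Int.toNat_natCast, if_neg (by omega)]

lemma dIter_zero (d : Derivation ℤ V V) (k : ℕ) : (⇑d)^[k] (0:V) = 0 :=
  Function.iterate_fixed (map_zero d) k

lemma dIter_intCast_mul (d : Derivation ℤ V V) (k : ℕ) (c : ℤ) (x : V) :
    (⇑d)^[k] ((c:V) * x) = (c:V) * (⇑d)^[k] x := by
  induction k generalizing x with
  | zero => simp
  | succ k ih =>
    rw [Function.iterate_succ_apply, Function.iterate_succ_apply]
    rw [show d ((c:V) * x) = (c:V) * d x by
      rw [← zsmul_eq_mul, Derivation.map_smul, zsmul_eq_mul], ih]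

lemma dIter_neg_one_pow_mul (d : Derivation ℤ V V) (e k : ℕ) (x : V) :
    (⇑d)^[e] ((-1:V)^k * x) = (-1:V)^k * (⇑d)^[e] x := by
  have : ((-1:V))^k = (((-1:ℤ)^k : ℤ) : V) := by push_cast; ring
  rw [this, dIter_intCast_mul]

lemma dIter_sub (d : Derivation ℤ V V) (e : ℕ) (x y : V) :
    (⇑d)^[e] (x - y) = (⇑d)^[e] x - (⇑d)^[e] y := by
  induction e generalizing x y with
  | zero => simp
  | succ e ih =>
    rw [Function.iterate_succ_apply, Function.iterate_succ_apply, Function.iterate_succ_apply,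
      map_sub, ih]

lemma dIter_sum (d : Derivation ℤ V V) (e : ℕ) {α : Type*} (s : Finset α) (f : α → V) :
    (⇑d)^[e] (∑ a ∈ s, f a) = ∑ a ∈ s, (⇑d)^[e] (f a) := by
  induction e with
  | zero => simp
  | succ e ih =>
    rw [Function.iterate_succ_apply', ih, map_sum]
    apply Finset.sum_congr rfl
    intro a _
    rw [Function.iterate_succ_apply']

lemma neg_one_pow_helper1 (t k : ℕ) : (-1:V)^t * (-1:V)^(k+t+1) = -(-1:V)^k := by
  rw [← pow_add, show t + (k+t+1) = 2*t + (k+1) by ring, pow_add, pow_mul, neg_one_sq, one_pow,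
    one_mul, pow_succ]
  ring

end Helpers

section BLemmas

variable {V : Type*} [CommRing V] (B : V → V → ℕ → V)

lemma B_zero_left (hadd1 : ∀ a b c s, B (a + b) c s = B a c s + B b c s) (c : V) (s : ℕ) :
    B 0 c s = 0 := by
  have h := hadd1 0 0 c s
  rw [add_zero] at h
  exact left_eq_add.mp h

lemma B_neg_left (hadd1 : ∀ a b c s, B (a + b) c s = B a c s + B b c s) (a c : V) (s : ℕ) :
    B (-a) c s = -B a c s := by
  have h := hadd1 a (-a) c s
  rw [add_neg_cancel, B_zero_left B hadd1] at h
  linear_combination -h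

lemma B_pow_left (hadd1 : ∀ a b c s, B (a + b) c s = B a c s + B b c s) (k : ℕ) (a c : V)
    (s : ℕ) : B ((-1:V)^k * a) c s = (-1:V)^k * B a c s := by
  rcases Nat.even_or_odd k with hk | hk
  · rw [hk.neg_one_pow, one_mul, one_mul]
  · rw [hk.neg_one_pow, neg_one_mul, neg_one_mul, B_neg_left B hadd1]

lemma B_zero_right (hadd2 : ∀ a b c s, B a (b + c) s = B a b s + B a c s) (c : V) (s : ℕ) :
    B c 0 s = 0 := by
  have h := hadd2 c 0 0 s
  rw [add_zero] at h
  exact left_eq_add.mp h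

lemma B_neg_right (hadd2 : ∀ a b c s, B a (b + c) s = B a b s + B a c s) (a c : V) (s : ℕ) :
    B c (-a) s = -B c a s := by
  have h := hadd2 c a (-a) s
  rw [add_neg_cancel, B_zero_right B hadd2] at h
  linear_combination -h

lemma B_pow_right (hadd2 : ∀ a b c s, B a (b + c) s = B a b s + B a c s) (k : ℕ) (a c : V)
    (s : ℕ) : B c ((-1:V)^k * a) s = (-1:V)^k * B c a s := by
  rcases Nat.even_or_odd k with hk | hk
  · rw [hk.neg_one_pow, one_mul, one_mul]
  · rw [hk.neg_one_pow, neg_one_mul, neg_one_mul, B_neg_right B hadd2]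

end BLemmas



section Adler2

variable {V : Type*} [CommRing V]

lemma adler2_eval (d : V → V) (y : ℤ → V) (i : ℕ) (q : ℤ) (s : ℕ) :
    adlerRHS2 d oneC y (i:ℤ) q s = 0 := by
  unfold adlerRHS2
  refine finsum_zero'' _ fun m => finsum_zero'' _ fun l => finsum_zero'' _ fun n =>
    finsum_zero'' _ fun j => finsum_zero'' _ fun v => ?_
  by_cases hc : m - (n : ℤ) - 1 = (i:ℤ) ∧ (n : ℤ) - (j : ℤ) + l = q ∧ j = s + v ∧ j ≤ n ∧ v ≤ j
  · rw [if_pos hc]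
    have hm : m ≠ 0 := by
      obtain ⟨h1, -⟩ := hc
      omega
    rw [show oneC m = (0:V) by rw [oneC, if_neg hm]]
    ring
  · rw [if_neg hc]

end Adler2


section Key1

lemma key1 (N i j s t : ℕ) (l : ℤ) (hst : s ≤ t) (hN : i+j+t+1 ≤ N)
    (hl : l = (i:ℤ)+(j:ℤ)+(t:ℤ)+1) :
    (∑ n ∈ Finset.range (N+1), ∑ u ∈ Finset.range (N+1),
      (if l - (((l - (i:ℤ) - (n:ℤ) - 1).toNat : ℕ) : ℤ) - (n:ℤ) - 1 = (i:ℤ) ∧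
           (0:ℤ) + (n:ℤ) - ((n - j : ℕ):ℤ) = (j:ℤ) ∧
           (l - (i:ℤ) - (n:ℤ) - 1).toNat + (n - j) = s + u + ((l - (i:ℤ) - (n:ℤ) - 1).toNat + (n - j) - s - u) ∧
           u ≤ (l - (i:ℤ) - (n:ℤ) - 1).toNat ∧
           (l - (i:ℤ) - (n:ℤ) - 1).toNat + (n - j) - s - u ≤ n - j then
         intBin ((0:ℤ)+(n:ℤ)) (n-j)
           * (((n-j).choose ((l - (i:ℤ) - (n:ℤ) - 1).toNat + (n - j) - s - u) : ℕ) : ℤ)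
           * intBin l ((l - (i:ℤ) - (n:ℤ) - 1).toNat)
           * (-1:ℤ)^((l - (i:ℤ) - (n:ℤ) - 1).toNat)
           * ((((l - (i:ℤ) - (n:ℤ) - 1).toNat).choose u : ℕ) : ℤ)
       else 0))
    = (-1:ℤ)^t * (((t+i).choose i : ℕ):ℤ) * ((t.choose (t-s) : ℕ):ℤ) := by
  have hinner : ∀ n ∈ Finset.range (N+1), (∑ u ∈ Finset.range (N+1),
      (if l - (((l - (i:ℤ) - (n:ℤ) - 1).toNat : ℕ) : ℤ) - (n:ℤ) - 1 = (i:ℤ) ∧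
           (0:ℤ) + (n:ℤ) - ((n - j : ℕ):ℤ) = (j:ℤ) ∧
           (l - (i:ℤ) - (n:ℤ) - 1).toNat + (n - j) = s + u + ((l - (i:ℤ) - (n:ℤ) - 1).toNat + (n - j) - s - u) ∧
           u ≤ (l - (i:ℤ) - (n:ℤ) - 1).toNat ∧
           (l - (i:ℤ) - (n:ℤ) - 1).toNat + (n - j) - s - u ≤ n - j then
         intBin ((0:ℤ)+(n:ℤ)) (n-j)
           * (((n-j).choose ((l - (i:ℤ) - (n:ℤ) - 1).toNat + (n - j) - s - u) : ℕ) : ℤ)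
           * intBin l ((l - (i:ℤ) - (n:ℤ) - 1).toNat)
           * (-1:ℤ)^((l - (i:ℤ) - (n:ℤ) - 1).toNat)
           * ((((l - (i:ℤ) - (n:ℤ) - 1).toNat).choose u : ℕ) : ℤ)
       else 0))
      = if j ≤ n ∧ n ≤ j + t then
          ((n.choose (n-j) : ℕ) : ℤ) * intBin l (j+t-n) * (-1:ℤ)^(j+t-n) * ((t.choose (t-s) : ℕ):ℤ)
        else 0 := by
    intro n hn
    rw [Finset.mem_range] at hn
    by_cases hjn : j ≤ n ∧ n ≤ j + t
    · have ha0 : (l - (i:ℤ) - (n:ℤ) - 1).toNat = j + t - n := by omega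
      have hcong : ∀ u ∈ Finset.range (N+1),
          (if l - (((l - (i:ℤ) - (n:ℤ) - 1).toNat : ℕ) : ℤ) - (n:ℤ) - 1 = (i:ℤ) ∧
             (0:ℤ) + (n:ℤ) - ((n - j : ℕ):ℤ) = (j:ℤ) ∧
             (l - (i:ℤ) - (n:ℤ) - 1).toNat + (n - j) = s + u + ((l - (i:ℤ) - (n:ℤ) - 1).toNat + (n - j) - s - u) ∧
             u ≤ (l - (i:ℤ) - (n:ℤ) - 1).toNat ∧
             (l - (i:ℤ) - (n:ℤ) - 1).toNat + (n - j) - s - u ≤ n - j then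
           intBin ((0:ℤ)+(n:ℤ)) (n-j)
             * (((n-j).choose ((l - (i:ℤ) - (n:ℤ) - 1).toNat + (n - j) - s - u) : ℕ) : ℤ)
             * intBin l ((l - (i:ℤ) - (n:ℤ) - 1).toNat)
             * (-1:ℤ)^((l - (i:ℤ) - (n:ℤ) - 1).toNat)
             * ((((l - (i:ℤ) - (n:ℤ) - 1).toNat).choose u : ℕ) : ℤ)
         else 0)
          = (if u ≤ (j+t-n) ∧ u ≤ t - s ∧ (t-s) - u ≤ n - j then
              (((j+t-n).choose u : ℕ):ℤ) * (((n-j).choose ((t-s)-u) : ℕ):ℤ) else 0)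
            * (((n.choose (n-j) : ℕ)):ℤ) * intBin l (j+t-n) * (-1:ℤ)^(j+t-n) := by
        intro u _
        rw [ha0]
        by_cases hu : u ≤ j+t-n ∧ u ≤ t-s ∧ (t-s)-u ≤ n-j
        · rw [if_pos hu, if_pos ⟨by omega, by omega, by omega, by omega, by omega⟩]
          rw [show (0:ℤ)+(n:ℤ) = ((n:ℕ):ℤ) by push_cast; ring, intBin_natCast]
          rw [show (j+t-n) + (n - j) - s - u = (t-s)-u by omega]
          ring
        · rw [if_neg hu, if_neg (by intro hcond; exact hu (by omega))]
          ring
      rw [Finset.sum_congr rfl hcong, if_pos hjn, ← Finset.sum_mul, ← Finset.sum_mul,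
        ← Finset.sum_mul, vand (j+t-n) (n-j) (t-s) N (by omega),
        show (j+t-n) + (n-j) = t by omega]
      ring
    · rw [if_neg hjn]
      apply Finset.sum_eq_zero
      intro u _
      rw [if_neg]
      rintro ⟨h1, h2, -, -, -⟩
      omega
  rw [Finset.sum_congr rfl hinner]
  rw [← Finset.sum_subset (s₁ := Finset.Icc j (j+t)) (fun x hx => Finset.mem_range.mpr
      (by rw [Finset.mem_Icc] at hx; omega))
      (fun x _ hx => by rw [if_neg (by rw [Finset.mem_Icc] at hx; omega)])]
  have hrel : ∑ n ∈ Finset.Icc j (j+t), (if j ≤ n ∧ n ≤ j + t then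
          ((n.choose (n-j) : ℕ) : ℤ) * intBin l (j+t-n) * (-1:ℤ)^(j+t-n) * ((t.choose (t-s) : ℕ):ℤ)
        else 0)
      = ∑ a ∈ Finset.range (t+1),
          ((-1:ℤ)^a * (((i+j+t+1).choose a : ℕ):ℤ) * (((t-a+j).choose j : ℕ):ℤ))
            * ((t.choose (t-s) : ℕ):ℤ) := by
    apply Finset.sum_nbij' (fun n => j+t-n) (fun a => j+t-a)
    · intro n hn
      rw [Finset.mem_Icc] at hn
      exact Finset.mem_range.mpr (by omega)
    · intro a ha
      rw [Finset.mem_range] at ha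
      exact Finset.mem_Icc.mpr (by omega)
    · intro n hn
      rw [Finset.mem_Icc] at hn
      omega
    · intro a ha
      rw [Finset.mem_range] at ha
      omega
    · intro n hn
      rw [Finset.mem_Icc] at hn
      rw [if_pos ⟨hn.1, hn.2⟩]
      rw [hl, show (i:ℤ)+(j:ℤ)+(t:ℤ)+1 = ((i+j+t+1 : ℕ):ℤ) by push_cast; ring, intBin_natCast]
      rw [show t - (j+t-n) + j = n by omega, Nat.choose_symm hn.1]
      ring
  rw [hrel, ← Finset.sum_mul, lemG j (i+j+t+1) t,
    show ((i+j+t+1 : ℕ):ℤ) - (j:ℤ) - 1 = ((i+t : ℕ):ℤ) by push_cast; ring, intBin_natCast]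
  rw [show (i+t).choose t = (t+i).choose i from by rw [Nat.add_comm i t]; exact Nat.choose_symm_add]

end Key1


section Adler1

variable {V : Type*} [CommRing V]

lemma adler1_eval (d : Derivation ℤ V V) (N : ℕ) (w : ℕ → V) (i j s : ℕ) :
    adlerRHS1 (⇑d) oneC (genC N w) (i:ℤ) (j:ℤ) s
    = ∑ t ∈ Finset.Ico s (N-i-j),
        ((((-1:ℤ)^t * (((t+i).choose i : ℕ):ℤ) * ((t.choose (t-s) : ℕ):ℤ)) : ℤ) : V)
          * (⇑d)^[t-s] (genC N w ((i:ℤ)+(j:ℤ)+(t:ℤ)+1)) := by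
  classical
  set F : ℤ → ℕ → ℕ → ℕ → ℕ → ℕ → V := fun l n i' j' u v =>
    if l - (i' : ℤ) - (n : ℤ) - 1 = (i:ℤ) ∧ (0:ℤ) + (n : ℤ) - (j' : ℤ) = (j:ℤ) ∧
        i' + j' = s + u + v ∧ u ≤ i' ∧ v ≤ j' then
      oneC 0 * ((intBin ((0:ℤ) + (n:ℤ)) j' : ℤ) : V) * (j'.choose v : V) *
        ((intBin l i' : ℤ) : V) * (-1 : V) ^ i' * (i'.choose u : V) * (⇑d)^[u + v] (genC N w l)
    else 0 with hF
  have hm : adlerRHS1 (⇑d) oneC (genC N w) (i:ℤ) (j:ℤ) s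
      = ∑ᶠ (l : ℤ) (n : ℕ) (i' : ℕ) (j' : ℕ) (u : ℕ) (v : ℕ), F l n i' j' u v := by
    rw [adlerRHS1]
    refine finsum_eq_single _ (0:ℤ) fun m hmne => ?_
    refine finsum_zero'' _ fun l => finsum_zero'' _ fun n => finsum_zero'' _ fun i' =>
      finsum_zero'' _ fun j' => finsum_zero'' _ fun u => finsum_zero'' _ fun v => ?_
    have : oneC (V := V) m = 0 := by rw [oneC, if_neg hmne]
    rw [this]
    simp
  rw [hm]
  -- side condition lemmas
  have side_i : ∀ (l : ℤ) (n : ℕ), l ≤ (N:ℤ) → ∀ i' : ℕ, i' ≠ (l - (i:ℤ) - (n:ℤ) - 1).toNat →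
      (∑ᶠ (j' : ℕ) (u : ℕ) (v : ℕ), F l n i' j' u v) = 0 := by
    intro l n _ i' hi'
    refine finsum_zero'' _ fun j' => finsum_zero'' _ fun u => finsum_zero'' _ fun v => ?_
    rw [hF]
    simp only
    rw [if_neg]
    rintro ⟨h1, -, -, -, -⟩
    omega
  have side_j : ∀ (l : ℤ) (n : ℕ), ∀ j' : ℕ, j' ≠ n - j →
      (∑ᶠ (u : ℕ) (v : ℕ), F l n ((l - (i:ℤ) - (n:ℤ) - 1).toNat) j' u v) = 0 := by
    intro l n j' hj'
    refine finsum_zero'' _ fun u => finsum_zero'' _ fun v => ?_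
    rw [hF]
    simp only
    rw [if_neg]
    rintro ⟨-, h2, -, -, -⟩
    omega
  have side_v : ∀ (l : ℤ) (n u : ℕ), ∀ v : ℕ,
      v ≠ (l - (i:ℤ) - (n:ℤ) - 1).toNat + (n - j) - s - u →
      F l n ((l - (i:ℤ) - (n:ℤ) - 1).toNat) (n - j) u v = 0 := by
    intro l n u v hv
    rw [hF]
    simp only
    rw [if_neg]
    rintro ⟨-, -, h3, -, -⟩
    omega
  have supp_u : ∀ (l : ℤ) (n : ℕ), l ≤ (N:ℤ) →
      (Function.support fun u => ∑ᶠ (v : ℕ), F l n ((l - (i:ℤ) - (n:ℤ) - 1).toNat) (n - j) u v)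
        ⊆ ↑(Finset.range (N+1)) := by
    intro l n hlN u hu
    simp only [Function.mem_support, ne_eq] at hu
    by_contra hmem
    apply hu
    simp only [Finset.coe_range, Set.mem_Iio, not_lt] at hmem
    refine finsum_zero'' _ fun v => ?_
    rw [hF]
    simp only
    rw [if_neg]
    rintro ⟨h1, -, -, h4, -⟩
    omega
  -- collapse l to a finite sum
  rw [finsum_eq_finset_sum_of_support_subset _ (s := Finset.Icc (0:ℤ) (N:ℤ)) ?suppl]
  case suppl =>
    intro l hl
    simp only [Function.mem_support, ne_eq] at hl
    by_contra hmem
    apply hl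
    simp only [Finset.coe_Icc, Set.mem_Icc, not_and_or, not_le] at hmem
    refine finsum_zero'' _ fun n => finsum_zero'' _ fun i' => finsum_zero'' _ fun j' =>
      finsum_zero'' _ fun u => finsum_zero'' _ fun v => ?_
    rw [hF]
    simp only
    have h0 : genC N w l = (0:V) := genC_eq_zero (by omega)
    by_cases hc : l - (i' : ℤ) - (n : ℤ) - 1 = (i:ℤ) ∧ (0:ℤ) + (n : ℤ) - (j' : ℤ) = (j:ℤ) ∧
        i' + j' = s + u + v ∧ u ≤ i' ∧ v ≤ j'
    · rw [if_pos hc, h0, dIter_zero, mul_zero]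
    · rw [if_neg hc]
  -- rewrite target as a sum over l ∈ Icc 0 N
  have htarget : ∑ l ∈ Finset.Icc (0:ℤ) (N:ℤ),
      (if (i:ℤ)+(j:ℤ)+(s:ℤ)+1 ≤ l then
        ((((-1:ℤ)^(l.toNat-i-j-1) * (((l.toNat-i-j-1+i).choose i : ℕ):ℤ)
          * (((l.toNat-i-j-1).choose (l.toNat-i-j-1-s) : ℕ):ℤ)) : ℤ) : V)
          * (⇑d)^[l.toNat-i-j-1-s] (genC N w l)
      else 0)
      = ∑ t ∈ Finset.Ico s (N-i-j),
        ((((-1:ℤ)^t * (((t+i).choose i : ℕ):ℤ) * ((t.choose (t-s) : ℕ):ℤ)) : ℤ) : V)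
          * (⇑d)^[t-s] (genC N w ((i:ℤ)+(j:ℤ)+(t:ℤ)+1)) := by
    rw [← Finset.sum_subset (s₁ := Finset.Icc ((i:ℤ)+(j:ℤ)+(s:ℤ)+1) (N:ℤ))
      (fun x hx => by rw [Finset.mem_Icc] at *; omega)
      (fun x hx1 hx2 => by
        rw [Finset.mem_Icc] at hx1
        rw [if_neg]
        intro hcon
        exact hx2 (Finset.mem_Icc.mpr ⟨hcon, hx1.2⟩))]
    apply Finset.sum_nbij' (fun l => l.toNat - i - j - 1) (fun t => ((i:ℤ)+(j:ℤ)+(t:ℤ)+1))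
    · intro l hl
      rw [Finset.mem_Icc] at hl
      rw [Finset.mem_Ico]
      omega
    · intro t ht
      rw [Finset.mem_Ico] at ht
      rw [Finset.mem_Icc]
      omega
    · intro l hl
      rw [Finset.mem_Icc] at hl
      omega
    · intro t ht
      rw [Finset.mem_Ico] at ht
      omega
    · intro l hl
      rw [Finset.mem_Icc] at hl
      rw [if_pos (by omega)]
      have harg : (i:ℤ)+(j:ℤ)+((l.toNat - i - j - 1 : ℕ):ℤ)+1 = l := by omega
      rw [harg]
  rw [← htarget]
  apply Finset.sum_congr rfl
  intro l hl
  rw [Finset.mem_Icc] at hl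
  -- collapse the inner finsums for fixed l
  have hcoll : (∑ᶠ (n : ℕ) (i' : ℕ) (j' : ℕ) (u : ℕ) (v : ℕ), F l n i' j' u v)
      = ∑ n ∈ Finset.range (N+1), ∑ u ∈ Finset.range (N+1),
          F l n ((l - (i:ℤ) - (n:ℤ) - 1).toNat) (n - j) u
            ((l - (i:ℤ) - (n:ℤ) - 1).toNat + (n - j) - s - u) := by
    rw [finsum_eq_finset_sum_of_support_subset _ (s := Finset.range (N+1)) ?suppn]
    case suppn =>
      intro n hn
      simp only [Function.mem_support, ne_eq] at hn
      by_contra hmem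
      apply hn
      simp only [Finset.coe_range, Set.mem_Iio, not_lt] at hmem
      refine finsum_zero'' _ fun i' => finsum_zero'' _ fun j' =>
        finsum_zero'' _ fun u => finsum_zero'' _ fun v => ?_
      rw [hF]
      simp only
      rw [if_neg]
      rintro ⟨h1, -, -, -, -⟩
      omega
    apply Finset.sum_congr rfl
    intro n hn
    rw [finsum_eq_single _ ((l - (i:ℤ) - (n:ℤ) - 1).toNat) (side_i l n hl.2),
      finsum_eq_single _ (n - j) (side_j l n),
      finsum_eq_finset_sum_of_support_subset _ (supp_u l n hl.2)]
    apply Finset.sum_congr rfl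
    intro u _
    rw [finsum_eq_single _ ((l - (i:ℤ) - (n:ℤ) - 1).toNat + (n - j) - s - u) (side_v l n u)]
  rw [hcoll]
  by_cases hcl : (i:ℤ)+(j:ℤ)+(s:ℤ)+1 ≤ l
  · rw [if_pos hcl]
    set Z : ℕ → ℕ → ℤ := fun n u =>
      if l - (((l - (i:ℤ) - (n:ℤ) - 1).toNat : ℕ) : ℤ) - (n:ℤ) - 1 = (i:ℤ) ∧
           (0:ℤ) + (n:ℤ) - ((n - j : ℕ):ℤ) = (j:ℤ) ∧
           (l - (i:ℤ) - (n:ℤ) - 1).toNat + (n - j) = s + u + ((l - (i:ℤ) - (n:ℤ) - 1).toNat + (n - j) - s - u) ∧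
           u ≤ (l - (i:ℤ) - (n:ℤ) - 1).toNat ∧
           (l - (i:ℤ) - (n:ℤ) - 1).toNat + (n - j) - s - u ≤ n - j then
         intBin ((0:ℤ)+(n:ℤ)) (n-j)
           * (((n-j).choose ((l - (i:ℤ) - (n:ℤ) - 1).toNat + (n - j) - s - u) : ℕ) : ℤ)
           * intBin l ((l - (i:ℤ) - (n:ℤ) - 1).toNat)
           * (-1:ℤ)^((l - (i:ℤ) - (n:ℤ) - 1).toNat)
           * ((((l - (i:ℤ) - (n:ℤ) - 1).toNat).choose u : ℕ) : ℤ)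
       else 0 with hZ
    have hterm : ∀ n ∈ Finset.range (N+1), ∀ u ∈ Finset.range (N+1),
        F l n ((l - (i:ℤ) - (n:ℤ) - 1).toNat) (n - j) u
          ((l - (i:ℤ) - (n:ℤ) - 1).toNat + (n - j) - s - u)
        = ((Z n u : ℤ) : V) * (⇑d)^[l.toNat-i-j-1-s] (genC N w l) := by
      intro n hn u hu
      rw [hF, hZ]
      simp only
      by_cases hc : l - (((l - (i:ℤ) - (n:ℤ) - 1).toNat : ℕ) : ℤ) - (n:ℤ) - 1 = (i:ℤ) ∧
             (0:ℤ) + (n:ℤ) - ((n - j : ℕ):ℤ) = (j:ℤ) ∧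
             (l - (i:ℤ) - (n:ℤ) - 1).toNat + (n - j) = s + u + ((l - (i:ℤ) - (n:ℤ) - 1).toNat + (n - j) - s - u) ∧
             u ≤ (l - (i:ℤ) - (n:ℤ) - 1).toNat ∧
             (l - (i:ℤ) - (n:ℤ) - 1).toNat + (n - j) - s - u ≤ n - j
      · rw [if_pos hc, if_pos hc]
        have hexp : u + ((l - (i:ℤ) - (n:ℤ) - 1).toNat + (n - j) - s - u) = l.toNat-i-j-1-s := by
          obtain ⟨h1, h2, h3, h4, h5⟩ := hc
          omega
        rw [hexp]
        have hone : oneC (V := V) 0 = 1 := by rw [oneC, if_pos rfl]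
        rw [hone]
        push_cast
        ring
      · rw [if_neg hc, if_neg hc]
        simp
    rw [Finset.sum_congr rfl (fun n hn => Finset.sum_congr rfl (fun u hu => hterm n hn u hu))]
    have hpull : (∑ n ∈ Finset.range (N+1), ∑ u ∈ Finset.range (N+1),
        ((Z n u : ℤ) : V) * (⇑d)^[l.toNat-i-j-1-s] (genC N w l))
        = (((∑ n ∈ Finset.range (N+1), ∑ u ∈ Finset.range (N+1), Z n u : ℤ)) : V)
            * (⇑d)^[l.toNat-i-j-1-s] (genC N w l) := by
      push_cast
      rw [Finset.sum_mul]
      apply Finset.sum_congr rfl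
      intro n _
      rw [Finset.sum_mul]
    rw [hpull]
    have hkey : (∑ n ∈ Finset.range (N+1), ∑ u ∈ Finset.range (N+1), Z n u)
        = (-1:ℤ)^(l.toNat-i-j-1) * (((l.toNat-i-j-1+i).choose i : ℕ):ℤ)
          * (((l.toNat-i-j-1).choose (l.toNat-i-j-1-s) : ℕ):ℤ) := by
      rw [hZ]
      exact key1 N i j s (l.toNat-i-j-1) l (by omega) (by omega) (by omega)
    rw [hkey]
  · rw [if_neg hcl]
    apply Finset.sum_eq_zero
    intro n hn
    apply Finset.sum_eq_zero
    intro u hu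
    rw [hF]
    simp only
    rw [if_neg]
    rintro ⟨h1, h2, h3, -, -⟩
    omega

end Adler1

/-- **First `λ`-bracket for the principal nilpotent of `gl_N`** (Section 7.1,
formula for `{w_i _λ w_j}₁`).  If the `λ`-bracket `{·_λ·}₁` (with coefficients
`B a b s`) satisfies the bi-Adler identity \eqref{eq:bi-adler} for the generic monic
operator `L₁(∂) = −(−∂)^N + Σ_k w_k(−∂)^k` (stated coefficient-wise in `z^p w^q λ^s`),
then on generators
`{w_i _λ w_j}₁ = Σ_{n=0}^{N−i−j−1}(binom(n+j,j)(−λ)ⁿ − binom(n+i,i)(λ+∂)ⁿ) w_{i+j+n+1}`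
(with `w_N = −1`), and in particular this bracket is skewsymmetric:
`{w_j _λ w_i}₁ = −{w_i _{−λ−∂} w_j}₁`. -/
theorem statement18 {V : Type*} [CommRing V] (d : Derivation ℤ V V) {N : ℕ} (hN : 0 < N)
    (w : ℕ → V) (B : V → V → ℕ → V)
    (hadd1 : ∀ a b c s, B (a + b) c s = B a c s + B b c s)
    (hadd2 : ∀ a b c s, B a (b + c) s = B a b s + B a c s)
    (hbiadler : ∀ (p q : ℤ) (s : ℕ),
        B (genC N w p) (genC N w q) s =
          (if p < 0 then ((intBin (q + s) s : ℤ) : V) * genC N w (p + q + s + 1) else 0)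
        - (if 0 ≤ q then ((q.toNat + s).choose s : V) * genC N w (p + q + s + 1) else 0)
        + adlerRHS1 (⇑d) oneC (genC N w) p q s - adlerRHS2 (⇑d) oneC (genC N w) p q s) :
    (∀ i j : ℕ, i < N → j < N → ∀ s : ℕ,
        B (w i) (w j) s =
          (if i + j + s + 1 ≤ N then
              ((s + j).choose j : V) * (-1 : V) ^ s * wExt N w (i + j + s + 1)
            else 0)
          - ∑ n ∈ Finset.Ico s (N - i - j),
              ((n + i).choose i : V) * (n.choose (n - s) : V) *
                (⇑d)^[n - s] (wExt N w (i + j + n + 1))) ∧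
    (∀ i j : ℕ, i < N → j < N → ∀ s : ℕ,
        B (w j) (w i) s =
          -∑ᶠ n : ℕ, if s ≤ n then
              (-1 : V) ^ n * (n.choose (n - s) : V) * (⇑d)^[n - s] (B (w i) (w j) n)
            else 0) := by
  have h1 : ∀ i j : ℕ, i < N → j < N → ∀ s : ℕ,
      B (w i) (w j) s =
        (if i + j + s + 1 ≤ N then
            ((s + j).choose j : V) * (-1 : V) ^ s * wExt N w (i + j + s + 1)
          else 0)
        - ∑ n ∈ Finset.Ico s (N - i - j),
            ((n + i).choose i : V) * (n.choose (n - s) : V) *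
              (⇑d)^[n - s] (wExt N w (i + j + n + 1)) := by
    intro i j hi hj s
    have hwi : w i = (-1:V)^i * genC N w (i:ℤ) := by
      rw [genC_eq N w i (le_of_lt hi), ← mul_assoc, ← pow_add,
        Even.neg_one_pow ⟨i, rfl⟩, one_mul, wExt, if_neg (Nat.ne_of_lt hi)]
    have hwj : w j = (-1:V)^j * genC N w (j:ℤ) := by
      rw [genC_eq N w j (le_of_lt hj), ← mul_assoc, ← pow_add,
        Even.neg_one_pow ⟨j, rfl⟩, one_mul, wExt, if_neg (Nat.ne_of_lt hj)]
    have e0 : B (w i) (w j) s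
        = B ((-1:V)^i * genC N w (i:ℤ)) ((-1:V)^j * genC N w (j:ℤ)) s :=
      congrFun (congrArg₂ B hwi hwj) s
    rw [e0, B_pow_left B hadd1, B_pow_right B hadd2, hbiadler (i:ℤ) (j:ℤ) s,
      if_neg (by omega : ¬((i:ℤ) < 0)), if_pos (by positivity : (0:ℤ) ≤ (j:ℤ)),
      adler2_eval (⇑d) (genC N w) i (j:ℤ) s, adler1_eval d N w i j s, sub_zero]
    simp only [Int.toNat_natCast]
    have hsum : ∀ t ∈ Finset.Ico s (N-i-j),
        ((((-1:ℤ)^t * (((t+i).choose i : ℕ):ℤ) * ((t.choose (t-s) : ℕ):ℤ)) : ℤ) : V)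
          * (⇑d)^[t-s] (genC N w ((i:ℤ)+(j:ℤ)+(t:ℤ)+1))
        = (-1:V)^(i+j) * -(((t+i).choose i : V) * ((t.choose (t-s)) : V)
            * (⇑d)^[t-s] (wExt N w (i+j+t+1))) := by
      intro t ht
      rw [Finset.mem_Ico] at ht
      rw [show (i:ℤ)+(j:ℤ)+(t:ℤ)+1 = ((i+j+t+1 : ℕ):ℤ) by push_cast; ring,
        genC_eq N w _ (by omega), dIter_neg_one_pow_mul]
      push_cast
      linear_combination (((t+i).choose i : V) * ((t.choose (t-s)) : V)
        * ((⇑d)^[t-s] (wExt N w (i+j+t+1)))) * neg_one_pow_helper1 (V := V) t (i+j)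
    rw [Finset.sum_congr rfl hsum, ← Finset.mul_sum, Finset.sum_neg_distrib]
    rw [show ((j + s).choose s) = ((s+j).choose j) from by
      rw [Nat.add_comm j s]; exact Nat.choose_symm_add]
    have hP : (-1:V)^(i+j) = (-1:V)^i * (-1:V)^j := pow_add (-1:V) i j
    have hi2 : (-1:V)^i * (-1:V)^i = 1 := by
      rw [← pow_add]; exact Even.neg_one_pow ⟨i, rfl⟩
    have hj2 : (-1:V)^j * (-1:V)^j = 1 := by
      rw [← pow_add]; exact Even.neg_one_pow ⟨j, rfl⟩
    by_cases hc : i + j + s + 1 ≤ N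
    · rw [if_pos hc]
      rw [show genC N w ((i:ℤ)+(j:ℤ)+(s:ℤ)+1) = (-1:V)^(i+j+s+1) * wExt N w (i+j+s+1) from by
        rw [show (i:ℤ)+(j:ℤ)+(s:ℤ)+1 = ((i+j+s+1 : ℕ):ℤ) by push_cast; ring]
        exact genC_eq N w _ hc]
      have hQ : (-1:V)^(i+j+s+1) = (-1:V)^i * (-1:V)^j * (-1:V)^s * (-1:V) := by
        rw [pow_add, pow_add, pow_add, pow_one]
      rw [hQ, hP]
      set CX : V := ((s+j).choose j : V) with hCX
      set W : V := wExt N w (i+j+s+1) with hW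
      set SS : V := ∑ t ∈ Finset.Ico s (N-i-j), (((t+i).choose i : V) * ((t.choose (t-s)) : V)
            * (⇑d)^[t-s] (wExt N w (i+j+t+1))) with hSS
      linear_combination ((-1:V)^i * (-1:V)^i * (CX * (-1:V)^s * W - SS)) * hj2
        + (CX * (-1:V)^s * W - SS) * hi2
    · rw [if_neg hc]
      rw [show genC N w ((i:ℤ)+(j:ℤ)+(s:ℤ)+1) = 0 from genC_eq_zero (by omega)]
      rw [hP]
      set SS : V := ∑ t ∈ Finset.Ico s (N-i-j), (((t+i).choose i : V) * ((t.choose (t-s)) : V)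
            * (⇑d)^[t-s] (wExt N w (i+j+t+1))) with hSS
      linear_combination ((-1:V)^i * (-1:V)^i * (- SS)) * hj2 + (- SS) * hi2
  refine ⟨h1, ?_⟩
  intro i j hi hj s
  rw [h1 j i hj hi s]
  have hfin : (∑ᶠ n : ℕ, if s ≤ n then
      (-1 : V) ^ n * (n.choose (n - s) : V) * (⇑d)^[n - s] (B (w i) (w j) n) else 0)
      = ∑ᶠ n : ℕ, if s ≤ n then
      (-1 : V) ^ n * (n.choose (n - s) : V) * (⇑d)^[n - s] (
        (if i + j + n + 1 ≤ N then
            ((n + j).choose j : V) * (-1 : V) ^ n * wExt N w (i + j + n + 1)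
          else 0)
        - ∑ m ∈ Finset.Ico n (N - i - j),
            ((m + i).choose i : V) * (m.choose (m - n) : V) *
              (⇑d)^[m - n] (wExt N w (i + j + m + 1))) else 0 :=
    finsum_congr fun n => by rw [h1 i j hi hj n]
  rw [hfin]
  rw [finsum_eq_finset_sum_of_support_subset _ (s := Finset.range (N+s+1)) ?hsupp]
  case hsupp =>
    intro n hn
    simp only [Function.mem_support, ne_eq] at hn
    by_contra hmem
    apply hn
    simp only [Finset.coe_range, Set.mem_Iio, not_lt] at hmem
    rw [if_pos (by omega : s ≤ n), if_neg (by omega : ¬(i + j + n + 1 ≤ N)),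
      Finset.Ico_eq_empty (by omega : ¬(n < N - i - j)), Finset.sum_empty, sub_zero,
      dIter_zero, mul_zero]
  have hdE : ∀ n ∈ Finset.range (N+s+1), (if s ≤ n then
      (-1 : V) ^ n * (n.choose (n - s) : V) * (⇑d)^[n - s] (
        (if i + j + n + 1 ≤ N then
            ((n + j).choose j : V) * (-1 : V) ^ n * wExt N w (i + j + n + 1)
          else 0)
        - ∑ m ∈ Finset.Ico n (N - i - j),
            ((m + i).choose i : V) * (m.choose (m - n) : V) *
              (⇑d)^[m - n] (wExt N w (i + j + m + 1))) else 0)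
      = (if s ≤ n ∧ i + j + n + 1 ≤ N then
            (n.choose (n-s) : V) * ((n + j).choose j : V) * (⇑d)^[n-s] (wExt N w (i + j + n + 1))
          else 0)
        - ∑ m ∈ Finset.range (N+s+1), (if s ≤ n ∧ n ≤ m ∧ m < N - i - j then
            (-1:V)^n * (n.choose (n-s) : V) * ((m + i).choose i : V) * (m.choose (m - n) : V)
              * (⇑d)^[m - s] (wExt N w (i + j + m + 1)) else 0) := by
    intro n hn
    rw [Finset.mem_range] at hn
    by_cases hsn : s ≤ n
    · rw [if_pos hsn, dIter_sub d, dIter_sum d, mul_sub]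
      congr 1
      · by_cases hcn : i + j + n + 1 ≤ N
        · rw [if_pos hcn, if_pos ⟨hsn, hcn⟩,
            show ((n + j).choose j : V) * (-1 : V) ^ n * wExt N w (i + j + n + 1)
              = (((-1:ℤ)^n * ((n + j).choose j : ℕ) : ℤ) : V) * wExt N w (i + j + n + 1) by
                push_cast; ring,
            dIter_intCast_mul]
          have h2n : (-1:V)^n*(-1:V)^n = 1 := by
            rw [← pow_add]; exact Even.neg_one_pow ⟨n, rfl⟩
          push_cast
          linear_combination ((n.choose (n-s) : V) * (((n + j).choose j : ℕ) : V)
            * (⇑d)^[n-s] (wExt N w (i + j + n + 1))) * h2n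
        · rw [if_neg hcn, if_neg (fun h => hcn h.2), dIter_zero, mul_zero]
      · rw [Finset.mul_sum]
        have hext : (∑ m ∈ Finset.Ico n (N - i - j), (if s ≤ n ∧ n ≤ m ∧ m < N - i - j then
              (-1:V)^n * (n.choose (n-s) : V) * ((m + i).choose i : V) * (m.choose (m - n) : V)
                * (⇑d)^[m - s] (wExt N w (i + j + m + 1)) else 0))
            = ∑ m ∈ Finset.range (N+s+1), (if s ≤ n ∧ n ≤ m ∧ m < N - i - j then
              (-1:V)^n * (n.choose (n-s) : V) * ((m + i).choose i : V) * (m.choose (m - n) : V)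
                * (⇑d)^[m - s] (wExt N w (i + j + m + 1)) else 0) :=
          Finset.sum_subset
            (fun x hx => by rw [Finset.mem_Ico] at hx; rw [Finset.mem_range]; omega)
            (fun x hx1 hx2 => by
              rw [if_neg]
              intro hcond
              exact hx2 (Finset.mem_Ico.mpr ⟨hcond.2.1, hcond.2.2⟩))
        rw [← hext]
        apply Finset.sum_congr rfl
        intro m hm
        rw [Finset.mem_Ico] at hm
        rw [if_pos ⟨hsn, hm.1, hm.2⟩,
          show ((m + i).choose i : V) * (m.choose (m - n) : V)
              * (⇑d)^[m - n] (wExt N w (i + j + m + 1))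
            = (((((m + i).choose i : ℕ) : ℤ) * ((m.choose (m - n) : ℕ) : ℤ) : ℤ) : V)
              * (⇑d)^[m - n] (wExt N w (i + j + m + 1)) by push_cast; ring,
          dIter_intCast_mul, ← Function.iterate_add_apply,
          show (n-s) + (m-n) = m - s by omega]
        push_cast
        ring
    · rw [if_neg hsn, if_neg (fun h => hsn h.1),
        Finset.sum_eq_zero (fun m _ => if_neg (fun h => hsn h.1)), sub_zero]
  rw [Finset.sum_congr rfl hdE, Finset.sum_sub_distrib, neg_sub, Finset.sum_comm]
  have hS2 : ∀ m ∈ Finset.range (N+s+1),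
      (∑ n ∈ Finset.range (N+s+1), (if s ≤ n ∧ n ≤ m ∧ m < N - i - j then
            (-1:V)^n * (n.choose (n-s) : V) * ((m + i).choose i : V) * (m.choose (m - n) : V)
              * (⇑d)^[m - s] (wExt N w (i + j + m + 1)) else 0))
      = if m = s then (if i + j + s + 1 ≤ N then
          ((s+i).choose i : V) * (-1:V)^s * wExt N w (i+j+s+1) else 0) else 0 := by
    intro m hm
    rw [Finset.mem_range] at hm
    by_cases hmc : s ≤ m ∧ m < N - i - j
    · rw [← Finset.sum_subset (s₁ := Finset.Icc s m)
          (fun x hx => by rw [Finset.mem_Icc] at hx; rw [Finset.mem_range]; omega)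
          (fun x hx1 hx2 => by
            rw [if_neg]
            intro hcond
            exact hx2 (Finset.mem_Icc.mpr ⟨hcond.1, hcond.2.1⟩))]
      have hval : ∀ n ∈ Finset.Icc s m, (if s ≤ n ∧ n ≤ m ∧ m < N - i - j then
            (-1:V)^n * (n.choose (n-s) : V) * ((m + i).choose i : V) * (m.choose (m - n) : V)
              * (⇑d)^[m - s] (wExt N w (i + j + m + 1)) else 0)
          = ((((-1:ℤ)^n * ((n.choose (n-s) : ℕ):ℤ) * ((m.choose (m-n) : ℕ):ℤ)) : ℤ) : V)
            * (((m + i).choose i : V) * (⇑d)^[m - s] (wExt N w (i + j + m + 1))) := by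
        intro n hn
        rw [Finset.mem_Icc] at hn
        rw [if_pos ⟨hn.1, hn.2, hmc.2⟩]
        push_cast
        ring
      rw [Finset.sum_congr rfl hval, ← Finset.sum_mul,
        show (∑ n ∈ Finset.Icc s m,
            ((((-1:ℤ)^n * ((n.choose (n-s) : ℕ):ℤ) * ((m.choose (m-n) : ℕ):ℤ)) : ℤ) : V))
          = (((∑ n ∈ Finset.Icc s m,
            ((-1:ℤ)^n * ((n.choose (n-s) : ℕ):ℤ) * ((m.choose (m-n) : ℕ):ℤ))) : ℤ) : V) from by
          push_cast; rfl,
        lemH s m hmc.1]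
      by_cases hms : m = s
      · subst hms
        rw [if_pos rfl, if_pos rfl, if_pos (by omega : i + j + m + 1 ≤ N), Nat.sub_self]
        push_cast
        rw [Function.iterate_zero_apply]
        ring
      · rw [if_neg hms, if_neg hms]
        simp
    · rw [Finset.sum_eq_zero (fun n hn => if_neg (fun h => hmc ⟨by omega, h.2.2⟩))]
      by_cases hms : m = s
      · subst hms
        rw [if_pos rfl, if_neg (by omega : ¬(i + j + m + 1 ≤ N))]
      · rw [if_neg hms]
  rw [Finset.sum_congr rfl hS2, Finset.sum_ite_eq' (Finset.range (N+s+1)) s,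
    if_pos (Finset.mem_range.mpr (by omega : s < N+s+1))]
  have hS1 : (∑ n ∈ Finset.range (N+s+1), (if s ≤ n ∧ i + j + n + 1 ≤ N then
            (n.choose (n-s) : V) * ((n + j).choose j : V) * (⇑d)^[n-s] (wExt N w (i + j + n + 1))
          else 0))
      = ∑ n ∈ Finset.Ico s (N-i-j),
          ((n.choose (n-s)) : V) * ((n + j).choose j : V) * (⇑d)^[n-s] (wExt N w (i + j + n + 1)) := by
    rw [← Finset.sum_subset (s₁ := Finset.Ico s (N-i-j))
        (fun x hx => by rw [Finset.mem_Ico] at hx; rw [Finset.mem_range]; omega)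
        (fun x hx1 hx2 => by
          rw [if_neg]
          intro hcond
          exact hx2 (Finset.mem_Ico.mpr ⟨hcond.1, by omega⟩))]
    apply Finset.sum_congr rfl
    intro n hn
    rw [Finset.mem_Ico] at hn
    rw [if_pos ⟨hn.1, by omega⟩]
  rw [hS1]
  rw [show N - j - i = N - i - j from by omega, Nat.add_comm j i]
  congr 1
  apply Finset.sum_congr rfl
  intro n _
  ring
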